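/- Equivalence of quantile thresholds with and without the test point: for scores S_1,...,S_n, S_{n+1} ∈ ℝ and α ∈ (0,1), the event S_{n+1} ≤ Quantile_{(1-α)(1+1/n)}(S_1,...,S_n) holds if and only if S_{n+1} ≤ Quantile_{1-α}(S_1,...,S_n,S_{n+1}). -/

import Mathlib

open MeasureTheory
open scoped ENNReal

/-- The `j`-th order statistic (1-indexed) of a finite real vector. -/
noncomputable def orderStat {m : ℕ} (v : Fin m → ℝ) (j : ℕ) : ℝ :=
  ((List.ofFn v).mergeSort (fun x y => x ≤ y)).getD (j - 1) 0

/-- `Quantile b v` is the `⌈b·m⌉`-th order statistic of `v ∈ ℝ^m`, with the conventions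
`Quantile b v = ⊤` if `b > 1` and `Quantile b v = ⊥` if `b ≤ 0`. -/
noncomputable def Quantile {m : ℕ} (b : ℝ) (v : Fin m → ℝ) : EReal :=
  if b > 1 then ⊤ else if b ≤ 0 then ⊥ else ((orderStat v ⌈b * m⌉.toNat : ℝ) : EReal)

/-- The deletion operator `Δ⁰_{k,τ}` of the paper (with `k` and `τ` counts of entries). -/
def delta0 {α : Type*} (m k τ : ℕ) (w : Fin m → α) : Fin (m - τ) → α :=
  fun i =>
    if i.val < m - τ - k then w ⟨i.val, by have := i.isLt; omega⟩
    else w ⟨i.val + τ, by have := i.isLt; omega⟩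

/-- The deletion operator `Δ¹_{k,τ}` of the paper. -/
def delta1 {α : Type*} (m k τ : ℕ) (w : Fin m → α) : Fin (m - τ) → α :=
  fun i =>
    if h : k + τ < m then
      if h2 : i.val < m - τ - k then w ⟨i.val + k + τ, by have := i.isLt; omega⟩
      else w ⟨i.val - (m - τ - k), by have := i.isLt; omega⟩
    else w ⟨(i.val + k + τ - m) % m, Nat.mod_lt _ (by have := i.isLt; omega)⟩

/-- Total variation distance between the laws of two random elements `U, V` under `P`. -/
noncomputable def dTV {Ω γ : Type*} [MeasurableSpace Ω] [MeasurableSpace γ]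
    (P : Measure Ω) (U V : Ω → γ) : ℝ :=
  ⨆ E : {E : Set γ // MeasurableSet E}, |(P (U ⁻¹' E.1)).toReal - (P (V ⁻¹' E.1)).toReal|

/-- The switch coefficient `Ψ_{k,τ}(W)` of a random vector `W` of length `m`. -/
noncomputable def switchCoef {Ω α : Type*} [MeasurableSpace Ω] [MeasurableSpace α]
    (P : Measure Ω) {m : ℕ} (W : Ω → Fin m → α) (k τ : ℕ) : ℝ :=
  dTV P (fun ω => delta0 m k τ (W ω)) (fun ω => delta1 m k τ (W ω))

/-- The averaged switch coefficient `Ψ̄_τ(W) = (1/m) ∑_{k=1}^m Ψ_{k,τ}(W)`. -/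
noncomputable def avgSwitchCoef {Ω α : Type*} [MeasurableSpace Ω] [MeasurableSpace α]
    (P : Measure Ω) {m : ℕ} (W : Ω → Fin m → α) (τ : ℕ) : ℝ :=
  (∑ k ∈ Finset.Icc 1 m, switchCoef P W k τ) / m

/-- Stationarity of a time series `Z = (Z_1,…,Z_{n+1})`. -/
def Stationary {Ω α : Type*} [MeasurableSpace Ω] [MeasurableSpace α]
    (P : Measure Ω) {n : ℕ} (Z : Ω → Fin (n + 1) → α) : Prop :=
  ∀ (ℓ i : ℕ) (h : i + ℓ ≤ n + 1),
    Measure.map (fun ω (j : Fin ℓ) => Z ω ⟨i + j.val, by have := j.isLt; omega⟩) P =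
      Measure.map (fun ω (j : Fin ℓ) => Z ω ⟨j.val, by have := j.isLt; omega⟩) P

/-- Exchangeability of a random vector. -/
def Exchangeable {Ω α : Type*} [MeasurableSpace Ω] [MeasurableSpace α]
    (P : Measure Ω) {n : ℕ} (Z : Ω → Fin (n + 1) → α) : Prop :=
  ∀ σ : Equiv.Perm (Fin (n + 1)),
    Measure.map (fun ω => Z ω ∘ σ) P = Measure.map Z P

/-- The β-mixing coefficient with lag `τ` of `Z`, defined via an independent copy `Z'`. -/
noncomputable def betaMix {Ω α : Type*} [MeasurableSpace Ω] [MeasurableSpace α]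
    (P : Measure Ω) (n : ℕ) (Z Z' : Ω → Fin (n + 1) → α) (τ : ℕ) : ℝ :=
  ⨆ k : Fin (n - τ),
    dTV P
      (fun ω (i : Fin (n + 1 - τ)) =>
        if i.val < k.val + 1 then Z ω ⟨i.val, by have := i.isLt; omega⟩
        else Z ω ⟨i.val + τ, by have := i.isLt; omega⟩)
      (fun ω (i : Fin (n + 1 - τ)) =>
        if i.val < k.val + 1 then Z ω ⟨i.val, by have := i.isLt; omega⟩
        else Z' ω ⟨i.val + τ, by have := i.isLt; omega⟩)

lemma sorted_le_getElem_iff (l : List ℝ) (hs : l.Pairwise (fun a b : ℝ => a ≤ b))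
    (j : ℕ) (hj : j < l.length) (s : ℝ) :
    s ≤ l[j] ↔ l.countP (fun x => decide (x < s)) ≤ j := by
  have hpair : ∀ i k (hi : i < l.length) (hk : k < l.length), i ≤ k → l[i] ≤ l[k] := by
    intro i k hi hk hik
    rcases eq_or_lt_of_le hik with rfl | h
    · rfl
    · exact (List.pairwise_iff_getElem.mp hs) i k hi hk h
  constructor
  · intro h
    have hdrop : (l.drop j).countP (fun x => decide (x < s)) = 0 := by
      rw [List.countP_eq_zero]
      intro a ha
      obtain ⟨i, hi, rfl⟩ := List.getElem_of_mem ha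
      rw [List.getElem_drop]
      have hji : j + i < l.length := by
        have := hi; rw [List.length_drop] at this; omega
      have : l[j] ≤ l[j + i] := hpair j (j+i) hj hji (by omega)
      simp only [decide_eq_true_eq, not_lt]
      exact le_trans h this
    calc l.countP (fun x => decide (x < s))
        = (l.take j ++ l.drop j).countP (fun x => decide (x < s)) := by
          rw [List.take_append_drop]
      _ = (l.take j).countP _ + (l.drop j).countP _ := List.countP_append
      _ = (l.take j).countP _ := by rw [hdrop, Nat.add_zero]
      _ ≤ (l.take j).length := List.countP_le_length
      _ ≤ j := by simp [List.length_take]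
  · intro h
    by_contra hc
    push_neg at hc
    have hlen : (l.take (j+1)).length = j + 1 := by
      rw [List.length_take]; omega
    have hfull : (l.take (j+1)).countP (fun x => decide (x < s)) = (l.take (j+1)).length := by
      rw [List.countP_eq_length]
      intro a ha
      obtain ⟨i, hi, rfl⟩ := List.getElem_of_mem ha
      rw [List.getElem_take]
      have hij : i < l.length := by
        have := hi; rw [hlen] at this; omega
      have : l[i] ≤ l[j] := hpair i j hij hj (by rw [hlen] at hi; omega)
      simp only [decide_eq_true_eq]
      exact lt_of_le_of_lt this hc
    have : j + 1 ≤ l.countP (fun x => decide (x < s)) := by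
      conv_rhs => rw [← List.take_append_drop (j+1) l]
      rw [List.countP_append, hfull, hlen]
      omega
    omega

lemma le_orderStat_iff {m : ℕ} (v : Fin m → ℝ) (j : ℕ) (h1 : 1 ≤ j) (h2 : j ≤ m) (s : ℝ) :
    s ≤ orderStat v j ↔ (List.ofFn v).countP (fun x => decide (x < s)) ≤ j - 1 := by
  unfold orderStat
  set l := (List.ofFn v).mergeSort (fun x y => x ≤ y) with hl
  have hlen : l.length = m := by
    rw [hl, (List.mergeSort_perm _ _).length_eq, List.length_ofFn]
  have hsorted : l.Pairwise (fun a b : ℝ => a ≤ b) := by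
    have h := List.pairwise_mergeSort (le := fun x y : ℝ => x ≤ y)
      (by intro a b c hab hbc; simp only [decide_eq_true_eq] at *; exact le_trans hab hbc)
      (by intro a b; simpa using le_total a b) (List.ofFn v)
    exact h.imp (by simp)
  have hjl : j - 1 < l.length := by omega
  rw [List.getD_eq_getElem l 0 hjl, sorted_le_getElem_iff l hsorted (j-1) hjl s,
    (List.mergeSort_perm (List.ofFn v) _).countP_eq]

/-- Equivalence of quantile thresholds with and without the test point. -/
theorem stmt4 {n : ℕ} (hn : 1 ≤ n) (S : Fin (n + 1) → ℝ) (α : ℝ) (hα : 0 < α) (hα1 : α < 1) :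
    ((S (Fin.last n) : EReal)
        ≤ Quantile ((1 - α) * (1 + 1 / (n : ℝ))) (fun i : Fin n => S i.castSucc))
      ↔ ((S (Fin.last n) : EReal) ≤ Quantile (1 - α) S) := by
  set s := S (Fin.last n) with hsdef
  have hnpos : (0:ℝ) < n := by exact_mod_cast hn
  -- arithmetic
  have h1α : (0:ℝ) < 1 - α := by linarith
  have hprod : (1 - α) * (1 + 1 / (n : ℝ)) * n = (1 - α) * (n + 1) := by
    field_simp
  have hx0 : (0:ℝ) < (1 - α) * (n + 1) := by positivity
  have hxlt : (1 - α) * (n + 1) < n + 1 := by nlinarith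
  set j : ℕ := ⌈(1 - α) * ((n:ℝ) + 1)⌉.toNat with hjdef
  have hj1 : 1 ≤ j := by
    have : (1:ℤ) ≤ ⌈(1 - α) * ((n:ℝ) + 1)⌉ := by
      rw [Int.le_ceil_iff]; push_cast; linarith
    omega
  have hjn1 : j ≤ n + 1 := by
    have : ⌈(1 - α) * ((n:ℝ) + 1)⌉ ≤ (n:ℤ) + 1 := by
      apply Int.ceil_le.mpr; push_cast; linarith
    omega
  -- count equality
  have hcount : (List.ofFn S).countP (fun x => decide (x < s)) =
      (List.ofFn fun i : Fin n => S i.castSucc).countP (fun x => decide (x < s)) := by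
    rw [List.ofFn_succ' S, List.concat_eq_append, List.countP_append]
    simp [hsdef]
  have hq2 : Quantile (1 - α) S = ((orderStat S j : ℝ) : EReal) := by
    rw [Quantile]
    rw [if_neg (by push_neg; linarith), if_neg (by push_neg; linarith)]
    rw [show (((n+1 : ℕ)):ℝ) = (n:ℝ) + 1 by push_cast; ring]
  by_cases hb : (1 - α) * (1 + 1 / (n : ℝ)) > 1
  · -- LHS is ⊤, RHS: j = n+1 and max bound
    have hLHS : Quantile ((1 - α) * (1 + 1 / (n : ℝ))) (fun i : Fin n => S i.castSucc) = ⊤ := by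
      rw [Quantile, if_pos hb]
    rw [hLHS, hq2]
    have hng : (n:ℝ) < (1 - α) * (n + 1) := by nlinarith [hprod, hb, hnpos]
    have hjeq : j = n + 1 := by
      have h1 : ((n:ℤ)) < ⌈(1 - α) * ((n:ℝ) + 1)⌉ := by
        apply Int.lt_ceil.mpr; push_cast; linarith
      omega
    have hmax : s ≤ orderStat S j := by
      rw [le_orderStat_iff S j (by omega) (by omega) s, hjeq]
      have hle : (List.ofFn fun i : Fin n => S i.castSucc).countP
          (fun x => decide (x < s)) ≤ n := by
        calc _ ≤ (List.ofFn fun i : Fin n => S i.castSucc).length := List.countP_le_length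
          _ = n := List.length_ofFn
      rw [hcount]
      omega
    constructor
    · intro _; exact_mod_cast hmax
    · intro _; exact le_top
  · push_neg at hb
    have hb0 : ¬ (1 - α) * (1 + 1 / (n : ℝ)) ≤ 0 := by
      push_neg
      have h1 : (0:ℝ) < 1 - α := by linarith
      positivity
    have hq1 : Quantile ((1 - α) * (1 + 1 / (n : ℝ))) (fun i : Fin n => S i.castSucc)
        = ((orderStat (fun i : Fin n => S i.castSucc) j : ℝ) : EReal) := by
      rw [Quantile, if_neg (by push_neg; exact hb), if_neg (by exact hb0)]
      rw [hprod]
    have hjn : j ≤ n := by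
      have : ⌈(1 - α) * ((n:ℝ) + 1)⌉ ≤ (n:ℤ) := by
        apply Int.ceil_le.mpr; push_cast; nlinarith [hb, hnpos]
      omega
    rw [hq1, hq2, EReal.coe_le_coe_iff, EReal.coe_le_coe_iff]
    rw [le_orderStat_iff _ j hj1 hjn s, le_orderStat_iff S j hj1 (by omega) s, hcount]
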